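/- Let A be an n×n doubly nonnegative matrix of rank 3 in block form A = [[A_{11}, A_{12}],[A_{21}, A_{22}]] with A_{11} a 3×3 invertible principal submatrix. If A_{11}^{-1}[A_{11}, A_{12}] is entrywise nonnegative, then A is completely positive with cp-rank(A) = 3. -/

import Mathlib

open Matrix BigOperators

def Matrix.IsCP {n : Type*} [Fintype n] (A : Matrix n n ℝ) : Prop :=
  ∃ (m : ℕ) (B : Matrix (Fin m) n ℝ), (∀ i j, 0 ≤ B i j) ∧ A = Bᵀ * B

noncomputable def Matrix.cpRank {n : Type*} [Fintype n] (A : Matrix n n ℝ) : ℕ :=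
  sInf {m | ∃ B : Matrix (Fin m) n ℝ, (∀ i j, 0 ≤ B i j) ∧ A = Bᵀ * B}


-- PSD + unit det ⇒ PosDef
lemma psd_posDef {n : Type*} [Fintype n] [DecidableEq n] {M : Matrix n n ℝ}
    (hM : M.PosSemidef) (hd : IsUnit M.det) : M.PosDef := by
  refine Matrix.PosDef.of_dotProduct_mulVec_pos hM.1 fun x hx => ?_
  rcases lt_or_eq_of_le (hM.dotProduct_mulVec_nonneg x) with h | h
  · exact h
  · exfalso
    have h0 : M.mulVec x = 0 := (hM.dotProduct_mulVec_zero_iff x).mp h.symm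
    have hinj : Function.Injective M.mulVec := Matrix.mulVec_injective_iff_isUnit.mpr ((Matrix.isUnit_iff_isUnit_det M).mpr hd)
    exact hx (hinj (by simpa using h0))


set_option maxHeartbeats 2000000 in
lemma cholupper (M : Matrix (Fin 3) (Fin 3) ℝ) (hM : M.PosDef)
    (hnn : ∀ i j, 0 ≤ M i j) (hae : M 0 1 * M 0 2 ≤ M 0 0 * M 1 2) :
    ∃ B : Matrix (Fin 3) (Fin 3) ℝ, (∀ i j, 0 ≤ B i j) ∧ M = Bᵀ * B := by
  obtain ⟨a, b, c, d, e, f, ha', hb', hc', hd', he', hf'⟩ :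
      ∃ a b c d e f, M 0 0 = a ∧ M 0 1 = b ∧ M 0 2 = c ∧ M 1 1 = d ∧ M 1 2 = e ∧ M 2 2 = f :=
    ⟨_, _, _, _, _, _, rfl, rfl, rfl, rfl, rfl, rfl⟩
  rw [ha', hb', hc', he'] at hae
  -- symmetry
  have hsym : ∀ i j, M j i = M i j := fun i j => by
    have := congrFun (congrFun hM.1 i) j
    simpa [Matrix.conjTranspose_apply] using this
  have h10 : M 1 0 = b := by rw [hsym 0 1, hb']
  have h20 : M 2 0 = c := by rw [hsym 0 2, hc']
  have h21 : M 2 1 = e := by rw [hsym 1 2, he']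
  -- a > 0
  have ha : 0 < a := by
    have := hM.dotProduct_mulVec_pos (x := fun i => if i = 0 then 1 else 0) (by intro h; simpa using congrFun h 0)
    simpa [Matrix.mulVec, dotProduct, Fin.sum_univ_three, ha'] using this
  -- ad - b^2 > 0
  have had : 0 < a * d - b ^ 2 := by
    have hx : (fun i => if i = 0 then -b else if i = 1 then a else 0) ≠ (0 : Fin 3 → ℝ) := by
      intro h
      have := congrFun h 1
      simp at this
      exact ha.ne' this
    have := hM.dotProduct_mulVec_pos hx
    simp [Matrix.mulVec, dotProduct, Fin.sum_univ_three, ha', hb', hd', h10] at this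
    nlinarith [this]
  have hdet : 0 < M.det := hM.det_pos
  have hD : M.det = a*(d*f - e*e) - b*(b*f - e*c) + c*(b*e - d*c) := by
    rw [Matrix.det_fin_three, ha', hb', hc', hd', he', hf', h10, h20, h21]
    ring
  have hb0 : 0 ≤ b := hb' ▸ hnn 0 1
  have hc0 : 0 ≤ c := hc' ▸ hnn 0 2
  obtain ⟨sa, hsa0, hsa2⟩ : ∃ sa : ℝ, 0 < sa ∧ sa ^ 2 = a :=
    ⟨Real.sqrt a, Real.sqrt_pos.mpr ha, Real.sq_sqrt ha.le⟩
  obtain ⟨s2, hs20, hs22⟩ : ∃ s2 : ℝ, 0 < s2 ∧ s2 ^ 2 = a * d - b ^ 2 :=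
    ⟨Real.sqrt _, Real.sqrt_pos.mpr had, Real.sq_sqrt had.le⟩
  obtain ⟨s3, hs30, hs32⟩ : ∃ s3 : ℝ, 0 ≤ s3 ∧
      s3 ^ 2 = (a*(d*f - e*e) - b*(b*f - e*c) + c*(b*e - d*c)) / (a * d - b ^ 2) :=
    ⟨Real.sqrt _, Real.sqrt_nonneg _, Real.sq_sqrt (div_nonneg (by rw [← hD]; exact hdet.le) had.le)⟩
  refine ⟨!![sa, b / sa, c / sa; 0, s2 / sa, (a * e - b * c) / (sa * s2); 0, 0, s3], ?_, ?_⟩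
  · intro i j
    fin_cases i <;> fin_cases j <;>
      norm_num [Matrix.vecHead, Matrix.vecTail] <;>
      first
        | positivity
        | exact div_nonneg (by linarith) (by positivity)
  · have e00 : M 0 0 = sa * sa := by rw [ha']; nlinarith
    have e01 : M 0 1 = sa * (b / sa) := by rw [hb']; field_simp
    have e02 : M 0 2 = sa * (c / sa) := by rw [hc']; field_simp
    have e11 : M 1 1 = b / sa * (b / sa) + s2 / sa * (s2 / sa) := by
      rw [hd']; field_simp; linear_combination d * hsa2 - hs22
    have e12 : M 1 2 = b / sa * (c / sa) + s2 / sa * ((a * e - b * c) / (sa * s2)) := by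
      rw [he']; field_simp; linear_combination e * hsa2
    have e22 : M 2 2 = c / sa * (c / sa) + (a * e - b * c) / (sa * s2) * ((a * e - b * c) / (sa * s2)) + s3 * s3 := by
      have h3 : s3 * s3 * (a*d - b^2) = a*(d*f - e*e) - b*(b*f - e*c) + c*(b*e - d*c) := by
        rw [← sq, hs32]; field_simp
      rw [hf']; field_simp
      linear_combination (f*sa^2 - c^2 - sa^2*s3^2) * hs22 + (f*(a*d-b^2) - (a*d-b^2)*s3^2) * hsa2 - a * h3
    have hBT : (!![sa, b / sa, c / sa; 0, s2 / sa, (a * e - b * c) / (sa * s2); 0, 0, s3] :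
        Matrix (Fin 3) (Fin 3) ℝ)ᵀ =
        !![sa, 0, 0; b / sa, s2 / sa, 0; c / sa, (a * e - b * c) / (sa * s2), s3] := by
      ext i j
      fin_cases i <;> fin_cases j <;> rfl
    rw [hBT, Matrix.mul_fin_three, Matrix.eta_fin_three M]
    rw [h10, h20, h21, e00, e01, e02, e11, e12, e22]
    ext i j
    fin_cases i <;> fin_cases j <;>
      simp [Matrix.vecHead, Matrix.vecTail] <;> (try field_simp) <;> (try ring) <;> linear_combination e * hsa2

lemma cp3 (M : Matrix (Fin 3) (Fin 3) ℝ) (hM : M.PosDef) (hnn : ∀ i j, 0 ≤ M i j) :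
    ∃ B : Matrix (Fin 3) (Fin 3) ℝ, (∀ i j, 0 ≤ B i j) ∧ M = Bᵀ * B := by
  by_cases hae : M 0 1 * M 0 2 ≤ M 0 0 * M 1 2
  · exact cholupper M hM hnn hae
  · push_neg at hae
    have hsym : ∀ i j, M j i = M i j := fun i j => by
      have := congrFun (congrFun hM.1 i) j
      simpa [Matrix.conjTranspose_apply] using this
    have ha : 0 < M 0 0 := by
      have := hM.dotProduct_mulVec_pos (x := fun i => if i = 0 then 1 else 0) (by intro h; simpa using congrFun h 0)
      simpa [Matrix.mulVec, dotProduct, Fin.sum_univ_three] using this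
    have had : 0 < M 0 0 * M 1 1 - M 0 1 ^ 2 := by
      have hx : (fun i => if i = 0 then -(M 0 1) else if i = 1 then M 0 0 else 0) ≠ (0 : Fin 3 → ℝ) := by
        intro h
        have := congrFun h 1
        simp at this
        exact ha.ne' this
      have := hM.dotProduct_mulVec_pos hx
      simp [Matrix.mulVec, dotProduct, Fin.sum_univ_three, hsym 0 1] at this
      nlinarith [this]
    set σ : Equiv.Perm (Fin 3) := Equiv.swap 0 1 with hσ
    have hσ0 : σ 0 = 1 := Equiv.swap_apply_left 0 1
    have hσ1 : σ 1 = 0 := Equiv.swap_apply_right 0 1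
    have hσ2 : σ 2 = 2 := by
      rw [hσ]; exact Equiv.swap_apply_of_ne_of_ne (by decide) (by decide)
    have hM' : (M.submatrix σ σ).PosDef := by
      apply psd_posDef (hM.posSemidef.submatrix σ)
      rw [Matrix.det_submatrix_equiv_self]
      exact hM.det_pos.ne'.isUnit
    have hnn' : ∀ i j, 0 ≤ M.submatrix σ σ i j := fun i j => hnn _ _
    have hae' : (M.submatrix σ σ) 0 1 * (M.submatrix σ σ) 0 2 ≤
        (M.submatrix σ σ) 0 0 * (M.submatrix σ σ) 1 2 := by
      simp only [Matrix.submatrix_apply, hσ0, hσ1, hσ2]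
      rw [hsym 0 1]
      -- goal : M 0 1 * M 1 2 ≤ M 1 1 * M 0 2
      nlinarith [hnn 0 1, hnn 0 2, hnn 1 1, hnn 1 2, had, hae.le, mul_nonneg (hnn 0 2) (hnn 1 2)]
    obtain ⟨B', hB'nn, hB'⟩ := cholupper _ hM' hnn' hae'
    refine ⟨B'.submatrix id σ, fun i j => hB'nn _ _, ?_⟩
    have hform : (B'.submatrix id σ)ᵀ * B'.submatrix id σ = (B'ᵀ * B').submatrix σ σ := by
      rw [Matrix.transpose_submatrix, Matrix.submatrix_mul B'ᵀ B' σ id σ Function.bijective_id]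
    rw [hform, ← hB']
    ext i j
    simp [Matrix.submatrix_apply, σ.symm_apply_eq]
    rw [hσ]
    rw [Equiv.swap_apply_self, Equiv.swap_apply_self]

theorem main_work (k : ℕ) (A : Matrix (Fin 3 ⊕ Fin k) (Fin 3 ⊕ Fin k) ℝ)
    (hnn : ∀ i j, 0 ≤ A i j) (hpsd : A.PosSemidef) (hrank : A.rank = 3)
    (hinv : IsUnit (A.submatrix Sum.inl Sum.inl).det)
    (h : ∀ i j, 0 ≤ ((A.submatrix Sum.inl Sum.inl)⁻¹ * A.submatrix Sum.inl id) i j) :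
    ∃ B : Matrix (Fin 3) (Fin 3 ⊕ Fin k) ℝ, (∀ i j, 0 ≤ B i j) ∧ A = Bᵀ * B := by
  classical
  set A11 := A.submatrix Sum.inl Sum.inl with hA11def
  have hA11psd : A11.PosSemidef := hpsd.submatrix Sum.inl
  have hA11pd : A11.PosDef := psd_posDef hA11psd hinv
  -- decompose A
  obtain ⟨W, hW⟩ : ∃ W : Matrix (Fin 3 ⊕ Fin k) (Fin 3 ⊕ Fin k) ℝ, A = Wᴴ * W := by
    open scoped MatrixOrder in
    exact CStarAlgebra.nonneg_iff_eq_star_mul_self.mp hpsd.nonneg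
  rw [show Wᴴ = Wᵀ from rfl] at hW
  set W1 := W.submatrix id Sum.inl with hW1def
  have hA11W : A11 = W1ᵀ * W1 := by
    ext i j
    simp [hA11def, hW, hW1def, Matrix.mul_apply, Matrix.submatrix_apply]
  -- ranges
  have hle : LinearMap.range W1.mulVecLin ≤ LinearMap.range W.mulVecLin := by
    rintro x ⟨v, rfl⟩
    refine ⟨Sum.elim v 0, ?_⟩
    ext a
    simp [hW1def, Matrix.mulVecLin_apply, Matrix.mulVec, dotProduct, Fintype.sum_sum_type]
  have hrankW : W.rank = 3 := by
    rw [← Matrix.rank_transpose_mul_self, ← hW, hrank]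
  have hrankA11 : A11.rank = 3 := by
    rw [Matrix.rank_of_isUnit A11 ((Matrix.isUnit_iff_isUnit_det _).mpr hinv)]
    simp
  have hrankW1 : W1.rank = 3 := by
    rw [← Matrix.rank_transpose_mul_self, ← hA11W, hrankA11]
  have hrange : LinearMap.range W1.mulVecLin = LinearMap.range W.mulVecLin := by
    apply Submodule.eq_of_le_of_finrank_le hle
    rw [show Module.finrank ℝ (LinearMap.range W.mulVecLin) = W.rank from rfl,
      show Module.finrank ℝ (LinearMap.range W1.mulVecLin) = W1.rank from rfl, hrankW, hrankW1]
  -- columns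
  have hcol : ∀ j, ∃ v : Fin 3 → ℝ, W1.mulVec v = fun a => W a j := by
    intro j
    have : (fun a => W a j) ∈ LinearMap.range W.mulVecLin := by
      refine ⟨Pi.single j 1, ?_⟩
      ext a
      simp [Matrix.mulVecLin_apply, Matrix.mulVec_single]
    rw [← hrange] at this
    exact this
  choose V hV using hcol
  set C0 : Matrix (Fin 3) (Fin 3 ⊕ Fin k) ℝ := Matrix.of (fun i j => V j i) with hC0def
  have hWC : W = W1 * C0 := by
    ext a j
    have := congrFun (hV j) a
    simp only [Matrix.mulVec, dotProduct] at this
    simp [Matrix.mul_apply, hC0def, ← this]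
  have hACA : A = C0ᵀ * A11 * C0 := by
    rw [hW, hWC, hA11W]
    rw [Matrix.transpose_mul]
    noncomm_ring [Matrix.mul_assoc]
  have hA11C : A11 * C0 = A.submatrix Sum.inl id := by
    have : A.submatrix Sum.inl id = W1ᵀ * W := by
      ext i j
      simp [hW, hW1def, Matrix.mul_apply, Matrix.submatrix_apply]
    rw [this, hWC, hA11W, Matrix.mul_assoc]
  have hC0eq : C0 = A11⁻¹ * A.submatrix Sum.inl id := by
    rw [← hA11C, ← Matrix.mul_assoc, Matrix.nonsing_inv_mul A11 hinv, Matrix.one_mul]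
  have hC0nn : ∀ i j, 0 ≤ C0 i j := by
    intro i j; rw [hC0eq]; exact h i j
  -- 3x3 factorization
  obtain ⟨B1, hB1nn, hB1⟩ := cp3 A11 hA11pd (fun i j => hnn _ _)
  refine ⟨B1 * C0, ?_, ?_⟩
  · intro i j
    rw [Matrix.mul_apply]
    exact Finset.sum_nonneg fun l _ => mul_nonneg (hB1nn i l) (hC0nn l j)
  · rw [Matrix.transpose_mul, hACA, hB1]
    noncomm_ring [Matrix.mul_assoc]

theorem stmt_19 (k : ℕ) (A : Matrix (Fin 3 ⊕ Fin k) (Fin 3 ⊕ Fin k) ℝ)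
    (hnn : ∀ i j, 0 ≤ A i j) (hpsd : A.PosSemidef) (hrank : A.rank = 3)
    (hinv : IsUnit (A.submatrix Sum.inl Sum.inl).det)
    (h : ∀ i j, 0 ≤ ((A.submatrix Sum.inl Sum.inl)⁻¹ * A.submatrix Sum.inl id) i j) :
    A.IsCP ∧ A.cpRank = 3 := by
  obtain ⟨B, hBnn, hB⟩ := main_work k A hnn hpsd hrank hinv h
  have h3mem : 3 ∈ {m | ∃ B : Matrix (Fin m) (Fin 3 ⊕ Fin k) ℝ,
      (∀ i j, 0 ≤ B i j) ∧ A = Bᵀ * B} := ⟨B, hBnn, hB⟩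
  have hlb : ∀ m ∈ {m | ∃ B : Matrix (Fin m) (Fin 3 ⊕ Fin k) ℝ,
      (∀ i j, 0 ≤ B i j) ∧ A = Bᵀ * B}, 3 ≤ m := by
    rintro m ⟨B', _, hB'⟩
    have : A.rank ≤ m := by
      rw [hB', Matrix.rank_transpose_mul_self]
      exact (Matrix.rank_le_card_height B').trans (Fintype.card_fin m).le
    omega
  refine ⟨⟨3, B, hBnn, hB⟩, ?_⟩
  refine le_antisymm (Nat.sInf_le h3mem) (hlb _ (Nat.sInf_mem ⟨3, h3mem⟩))
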